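/- Let 0 < γ < 1 and let ∂_x^γ K' denote the spatial fractional derivative of the spatial derivative of the truncated heat kernel K. Then for every x ≠ 0, the one-sided limit ∂_x^γ K'(0+, x) := lim_{t↓0} ∂_x^γ K'(t,x) exists. Moreover, the extension defined by reflecting in t satisfies |tilde{∂_x^γ K'}(z) - tilde{∂_x^γ K'}(w)| ≲ ‖z-w‖ ‖z‖^{-3-γ} uniformly over z, w with ‖z-w‖ ≤ ‖z‖/2. -/
import Mathlib


open MeasureTheory Real Filter

/-- The parabolic norm `‖(t,x)‖ = √|t| + |x|` on `ℝ²`. -/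
noncomputable def pnorm (z : ℝ × ℝ) : ℝ := Real.sqrt |z.1| + |z.2|

lemma pnorm_nonneg (z : ℝ × ℝ) : 0 ≤ pnorm z :=
  add_nonneg (Real.sqrt_nonneg _) (abs_nonneg _)

lemma pnorm_pos {z : ℝ × ℝ} (hz : z ≠ 0) : 0 < pnorm z := by
  rcases eq_or_ne z.1 0 with h1 | h1
  · have h2 : z.2 ≠ 0 := by
      intro h2; exact hz (Prod.ext h1 h2)
    have h3 : 0 < |z.2| := abs_pos.mpr h2
    have := Real.sqrt_nonneg |z.1|
    unfold pnorm; linarith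
  · have h3 : 0 < Real.sqrt |z.1| := Real.sqrt_pos.mpr (abs_pos.mpr h1)
    have := abs_nonneg z.2
    unfold pnorm; linarith

lemma sqrt_add_le'' {a b : ℝ} (ha : 0 ≤ a) (hb : 0 ≤ b) :
    Real.sqrt (a + b) ≤ Real.sqrt a + Real.sqrt b := by
  have h1 := Real.sq_sqrt ha
  have h2 := Real.sq_sqrt hb
  have h3 : a + b ≤ (Real.sqrt a + Real.sqrt b) ^ 2 := by
    nlinarith [Real.sqrt_nonneg a, Real.sqrt_nonneg b]
  calc Real.sqrt (a + b) ≤ Real.sqrt ((Real.sqrt a + Real.sqrt b) ^ 2) := Real.sqrt_le_sqrt h3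
    _ = Real.sqrt a + Real.sqrt b := Real.sqrt_sq (by positivity)

/-- `√|t| ≤ √|s| + √|t-s|`. -/
lemma sqrt_abs_triangle (t s : ℝ) :
    Real.sqrt |t| ≤ Real.sqrt |s| + Real.sqrt |t - s| := by
  calc Real.sqrt |t| ≤ Real.sqrt (|s| + |t - s|) := by
        apply Real.sqrt_le_sqrt
        have := abs_sub_abs_le_abs_sub t s
        linarith [le_abs_self (|t| - |s|)]
    _ ≤ _ := sqrt_add_le'' (abs_nonneg _) (abs_nonneg _)

lemma abs_sub_le_of_mem_uIcc {x y u : ℝ} (hu : u ∈ Set.uIcc x y) : |u - x| ≤ |y - x| := by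
  rw [Set.mem_uIcc] at hu
  rw [abs_sub_le_iff]
  rcases hu with ⟨h1, h2⟩ | ⟨h1, h2⟩ <;>
    constructor <;> linarith [le_abs_self (y - x), neg_abs_le (y - x)]

/-- The reflected extension: `F(|t|,x)` for `t ≠ 0` and the limit from `t → 0+` at `t = 0`. -/
noncomputable def FtilFun (F : ℝ × ℝ → ℝ) : ℝ × ℝ → ℝ := fun z =>
  if z.1 = 0 then limUnder (nhdsWithin (0 : ℝ) (Set.Ioi 0)) (fun t => F (t, z.2))
  else F (|z.1|, z.2)

lemma FtilFun_pos {F : ℝ × ℝ → ℝ} {t : ℝ} (x : ℝ) (ht : 0 < t) :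
    FtilFun F (t, x) = F (t, x) := by
  simp [FtilFun, ne_of_gt ht, abs_of_pos ht]

lemma FtilFun_neg {F : ℝ × ℝ → ℝ} {t : ℝ} (x : ℝ) (ht : t < 0) :
    FtilFun F (t, x) = F (-t, x) := by
  simp [FtilFun, ne_of_lt ht, abs_of_neg ht]

lemma FtilFun_abs (F : ℝ × ℝ → ℝ) (t x : ℝ) :
    FtilFun F (t, x) = FtilFun F (|t|, x) := by
  rcases lt_trichotomy t 0 with ht | rfl | ht
  · rw [FtilFun_neg x ht, abs_of_neg ht, FtilFun_pos x (by linarith)]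
  · simp
  · rw [abs_of_pos ht]

section Main

variable {γ : ℝ} {F : ℝ × ℝ → ℝ} {C : ℝ}

/-- Mean value estimate in the time variable, away from `t = 0`. -/
lemma mvt_t (hγ : 0 < γ) (hC : 0 < C)
    (hdifft : ∀ t x : ℝ, t ≠ 0 → DifferentiableAt ℝ (fun s => F (s, x)) t)
    (hdt : ∀ t x : ℝ, t ≠ 0 → |deriv (fun s => F (s, x)) t| ≤ C * pnorm (t, x) ^ (-4 - γ))
    {x a b r : ℝ} (ha : 0 < a) (hab : a ≤ b) (hr : 0 < r)
    (hbound : ∀ τ ∈ Set.Icc a b, r ≤ pnorm (τ, x)) :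
    |F (b, x) - F (a, x)| ≤ C * r ^ (-4 - γ) * (b - a) := by
  have key := Convex.norm_image_sub_le_of_norm_deriv_le (𝕜 := ℝ)
    (f := fun s => F (s, x)) (s := Set.Icc a b) (C := C * r ^ (-4 - γ))
    (fun τ hτ => hdifft τ x (ne_of_gt (lt_of_lt_of_le ha hτ.1)))
    (fun τ hτ => by
      have h1 := hdt τ x (ne_of_gt (lt_of_lt_of_le ha hτ.1))
      have h2 : pnorm (τ, x) ^ (-4 - γ) ≤ r ^ (-4 - γ) :=
        Real.rpow_le_rpow_of_nonpos hr (hbound τ hτ) (by linarith)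
      calc ‖deriv (fun s => F (s, x)) τ‖ = |deriv (fun s => F (s, x)) τ| := rfl
        _ ≤ C * pnorm (τ, x) ^ (-4 - γ) := h1
        _ ≤ C * r ^ (-4 - γ) := by
            exact mul_le_mul_of_nonneg_left h2 hC.le)
    (convex_Icc a b) (Set.left_mem_Icc.mpr hab) (Set.right_mem_Icc.mpr hab)
  have hba : ‖b - a‖ = b - a := by
    rw [Real.norm_eq_abs, abs_of_nonneg (sub_nonneg.mpr hab)]
  rw [Real.norm_eq_abs, hba] at key
  exact key

lemma limit_exists (hγ : 0 < γ) (hC : 0 < C)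
    (hdifft : ∀ t x : ℝ, t ≠ 0 → DifferentiableAt ℝ (fun s => F (s, x)) t)
    (hdt : ∀ t x : ℝ, t ≠ 0 → |deriv (fun s => F (s, x)) t| ≤ C * pnorm (t, x) ^ (-4 - γ))
    {x : ℝ} (hx : x ≠ 0) :
    ∃ L, Tendsto (fun t => F (t, x)) (nhdsWithin 0 (Set.Ioi 0)) (nhds L) := by
  have hax : 0 < |x| := abs_pos.mpr hx
  set K := C * |x| ^ (-4 - γ) with hKdef
  have hK0 : 0 ≤ K := by positivity
  have key : ∀ a b : ℝ, 0 < a → a ≤ b → |F (b, x) - F (a, x)| ≤ K * (b - a) := by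
    intro a b ha hab
    exact mvt_t hγ hC hdifft hdt ha hab hax (fun τ _ => by
      simp only [pnorm]
      linarith [Real.sqrt_nonneg |τ|])
  have lip : LipschitzOnWith (Real.toNNReal K) (fun t => F (t, x)) (Set.Ioi 0) := by
    rw [lipschitzOnWith_iff_dist_le_mul]
    intro a ha b hb
    have hcoe : ((Real.toNNReal K) : ℝ) = K := Real.coe_toNNReal K hK0
    rw [hcoe, Real.dist_eq, Real.dist_eq]
    rcases le_total a b with h | h
    · rw [abs_sub_comm (F (a, x)) (F (b, x)), abs_sub_comm a b]
      rw [abs_of_nonneg (sub_nonneg.mpr h)]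
      exact key a b ha h
    · rw [abs_of_nonneg (sub_nonneg.mpr h)]
      exact key b a hb h
  obtain ⟨g, hg, hgeq⟩ := lip.extend_real
  refine ⟨g 0, ?_⟩
  have hgt : Tendsto g (nhdsWithin (0 : ℝ) (Set.Ioi 0)) (nhds (g 0)) :=
    (hg.continuous.tendsto 0).mono_left nhdsWithin_le_nhds
  apply hgt.congr'
  filter_upwards [self_mem_nhdsWithin] with t ht
  exact (hgeq ht).symm

lemma tendsto_FtilFun (hγ : 0 < γ) (hC : 0 < C)
    (hdifft : ∀ t x : ℝ, t ≠ 0 → DifferentiableAt ℝ (fun s => F (s, x)) t)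
    (hdt : ∀ t x : ℝ, t ≠ 0 → |deriv (fun s => F (s, x)) t| ≤ C * pnorm (t, x) ^ (-4 - γ))
    {x : ℝ} (hx : x ≠ 0) :
    Tendsto (fun t => F (t, x)) (nhdsWithin 0 (Set.Ioi 0)) (nhds (FtilFun F (0, x))) := by
  have h0 : FtilFun F (0, x) = limUnder (nhdsWithin (0 : ℝ) (Set.Ioi 0)) (fun t => F (t, x)) := by
    simp [FtilFun]
  rw [h0]
  exact tendsto_nhds_limUnder (limit_exists hγ hC hdifft hdt hx)

/-- Time-variation estimate for the reflected function, including the endpoint `a = 0`. -/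
lemma stepT (hγ : 0 < γ) (hC : 0 < C)
    (hdifft : ∀ t x : ℝ, t ≠ 0 → DifferentiableAt ℝ (fun s => F (s, x)) t)
    (hdt : ∀ t x : ℝ, t ≠ 0 → |deriv (fun s => F (s, x)) t| ≤ C * pnorm (t, x) ^ (-4 - γ))
    {x a b r : ℝ} (hx : x ≠ 0 ∨ 0 < a) (ha : 0 ≤ a) (hab : a ≤ b) (hr : 0 < r)
    (hbound : ∀ τ, a ≤ τ → τ ≤ b → 0 < τ → r ≤ pnorm (τ, x)) :
    |FtilFun F (b, x) - FtilFun F (a, x)| ≤ C * r ^ (-4 - γ) * (b - a) := by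
  rcases ha.lt_or_eq with ha' | ha'
  · -- 0 < a
    rw [FtilFun_pos x (lt_of_lt_of_le ha' hab), FtilFun_pos x ha']
    exact mvt_t hγ hC hdifft hdt ha' hab hr (fun τ hτ =>
      hbound τ hτ.1 hτ.2 (lt_of_lt_of_le ha' hτ.1))
  · -- a = 0
    subst ha'
    have hx0 : x ≠ 0 := hx.resolve_right (lt_irrefl 0)
    rcases hab.lt_or_eq with hb' | hb'
    · have hFb : FtilFun F (b, x) = F (b, x) := FtilFun_pos x hb'
      have hlim : Tendsto (fun τ => |F (b, x) - F (τ, x)|) (nhdsWithin 0 (Set.Ioi 0))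
          (nhds |F (b, x) - FtilFun F (0, x)|) :=
        (tendsto_const_nhds.sub (tendsto_FtilFun hγ hC hdifft hdt hx0)).abs
      have hev : ∀ᶠ τ in nhdsWithin (0 : ℝ) (Set.Ioi 0),
          |F (b, x) - F (τ, x)| ≤ C * r ^ (-4 - γ) * b := by
        filter_upwards [Ioc_mem_nhdsGT hb'] with τ hτ
        have hmvt := mvt_t hγ hC hdifft hdt hτ.1 hτ.2 hr (fun σ hσ =>
          hbound σ (le_of_lt (lt_of_lt_of_le hτ.1 hσ.1)) hσ.2 (lt_of_lt_of_le hτ.1 hσ.1))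
        have h2 : C * r ^ (-4 - γ) * (b - τ) ≤ C * r ^ (-4 - γ) * b := by
          have : (0:ℝ) ≤ C * r ^ (-4 - γ) := by positivity
          nlinarith [hτ.1]
        exact hmvt.trans h2
      have := le_of_tendsto hlim hev
      rw [hFb]
      simpa using this
    · subst hb'
      simp [hr.le]

/-- Spatial mean value estimate at a fixed positive time. -/
lemma stepX (hγ : 0 < γ) (hC : 0 < C)
    (hdiffx : ∀ t x : ℝ, t ≠ 0 → DifferentiableAt ℝ (fun y => F (t, y)) x)
    (hdx : ∀ t x : ℝ, t ≠ 0 → |deriv (fun y => F (t, y)) x| ≤ C * pnorm (t, x) ^ (-3 - γ))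
    {s x y r : ℝ} (hs : 0 < s) (hr : 0 < r)
    (hbound : ∀ u ∈ Set.uIcc x y, r ≤ pnorm (s, u)) :
    |F (s, x) - F (s, y)| ≤ C * r ^ (-3 - γ) * |x - y| := by
  have key := Convex.norm_image_sub_le_of_norm_deriv_le (𝕜 := ℝ)
    (f := fun u => F (s, u)) (s := Set.uIcc x y) (C := C * r ^ (-3 - γ))
    (fun u _ => hdiffx s u (ne_of_gt hs))
    (fun u hu => by
      have h1 := hdx s u (ne_of_gt hs)
      have h2 : pnorm (s, u) ^ (-3 - γ) ≤ r ^ (-3 - γ) :=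
        Real.rpow_le_rpow_of_nonpos hr (hbound u hu) (by linarith)
      calc ‖deriv (fun v => F (s, v)) u‖ = |deriv (fun v => F (s, v)) u| := rfl
        _ ≤ C * pnorm (s, u) ^ (-3 - γ) := h1
        _ ≤ C * r ^ (-3 - γ) := mul_le_mul_of_nonneg_left h2 hC.le)
    (convex_uIcc x y) Set.right_mem_uIcc Set.left_mem_uIcc
  rw [Real.norm_eq_abs, Real.norm_eq_abs] at key
  exact key

/-- Spatial estimate at time `0` via the limit. -/
lemma stepX0 (hγ : 0 < γ) (hC : 0 < C)
    (hdiffx : ∀ t x : ℝ, t ≠ 0 → DifferentiableAt ℝ (fun y => F (t, y)) x)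
    (hdifft : ∀ t x : ℝ, t ≠ 0 → DifferentiableAt ℝ (fun s => F (s, x)) t)
    (hdx : ∀ t x : ℝ, t ≠ 0 → |deriv (fun y => F (t, y)) x| ≤ C * pnorm (t, x) ^ (-3 - γ))
    (hdt : ∀ t x : ℝ, t ≠ 0 → |deriv (fun s => F (s, x)) t| ≤ C * pnorm (t, x) ^ (-4 - γ))
    {x y r : ℝ} (hr : 0 < r) (hbound : ∀ u ∈ Set.uIcc x y, r ≤ |u|) :
    |FtilFun F (0, x) - FtilFun F (0, y)| ≤ C * r ^ (-3 - γ) * |x - y| := by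
  have hx : x ≠ 0 := by
    have := hbound x Set.left_mem_uIcc
    intro h; rw [h] at this; simp at this; linarith
  have hy : y ≠ 0 := by
    have := hbound y Set.right_mem_uIcc
    intro h; rw [h] at this; simp at this; linarith
  have hlim : Tendsto (fun τ => |F (τ, x) - F (τ, y)|) (nhdsWithin 0 (Set.Ioi 0))
      (nhds |FtilFun F (0, x) - FtilFun F (0, y)|) :=
    ((tendsto_FtilFun hγ hC hdifft hdt hx).sub (tendsto_FtilFun hγ hC hdifft hdt hy)).abs
  apply le_of_tendsto hlim
  filter_upwards [self_mem_nhdsWithin] with τ hτ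
  refine stepX hγ hC hdiffx hdx hτ hr (fun u hu => ?_)
  have heq : pnorm (τ, u) = Real.sqrt |τ| + |u| := rfl
  rw [heq]
  have := hbound u hu
  have := Real.sqrt_nonneg |τ|
  linarith

end Main

/-- Let `F = ∂ₓ^γ K'` satisfy, for `t ≠ 0`, the derivative bounds
`|∂ₓF(z)| ≲ ‖z‖^{-3-γ}` and `|∂ₜF(z)| ≲ ‖z‖^{-4-γ}`.  Then for every `x ≠ 0` the limit
`F(0+,x) = lim_{t↓0} F(t,x)` exists, and the even-in-`t` extension `F̃` satisfies
`|F̃(z) - F̃(w)| ≲ ‖z-w‖ ‖z‖^{-3-γ}` whenever `‖z-w‖ ≤ ‖z‖/2`. -/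
theorem stmt18 (γ : ℝ) (hγ0 : 0 < γ) (hγ1 : γ < 1) (F : ℝ × ℝ → ℝ) (C : ℝ) (hC : 0 < C)
    (hdiffx : ∀ t x : ℝ, t ≠ 0 → DifferentiableAt ℝ (fun y => F (t, y)) x)
    (hdifft : ∀ t x : ℝ, t ≠ 0 → DifferentiableAt ℝ (fun s => F (s, x)) t)
    (hdx : ∀ t x : ℝ, t ≠ 0 →
      |deriv (fun y => F (t, y)) x| ≤ C * pnorm (t, x) ^ (-3 - γ))
    (hdt : ∀ t x : ℝ, t ≠ 0 →
      |deriv (fun s => F (s, x)) t| ≤ C * pnorm (t, x) ^ (-4 - γ)) :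
    ∃ Ftil : ℝ × ℝ → ℝ,
      (∀ t x : ℝ, 0 < t → Ftil (t, x) = F (t, x)) ∧
      (∀ t x : ℝ, t < 0 → Ftil (t, x) = F (-t, x)) ∧
      (∀ x : ℝ, x ≠ 0 → Tendsto (fun t => F (t, x)) (nhdsWithin 0 (Set.Ioi 0))
        (nhds (Ftil (0, x)))) ∧
      ∃ C' : ℝ, 0 < C' ∧ ∀ z w : ℝ × ℝ, z ≠ 0 → w ≠ 0 →
        pnorm (z - w) ≤ pnorm z / 2 →
        |Ftil z - Ftil w| ≤ C' * pnorm (z - w) * pnorm z ^ (-3 - γ) := by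
  have hγ : 0 < γ := hγ0
  refine ⟨FtilFun F, fun t x ht => FtilFun_pos x ht, fun t x ht => FtilFun_neg x ht,
    fun x hx => tendsto_FtilFun hγ hC hdifft hdt hx,
    C * 2 ^ (4 + γ), by positivity, ?_⟩
  rintro ⟨t, x⟩ ⟨s, y⟩ hz hw hzw
  -- notation
  set P := pnorm (t, x) with hPdef
  set d := pnorm ((t, x) - (s, y)) with hddef
  have hP : 0 < P := pnorm_pos hz
  set r := P / 2 with hrdef
  have hr : 0 < r := by positivity
  have hd_eq : d = Real.sqrt |t - s| + |x - y| := by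
    simp [hddef, pnorm, Prod.fst_sub, Prod.snd_sub]
  have hd0 : 0 ≤ d := pnorm_nonneg _
  have hdr : d ≤ r := hzw
  have hd1 : Real.sqrt |t - s| ≤ d := by
    rw [hd_eq]; linarith [abs_nonneg (x - y)]
  have hd2 : |x - y| ≤ d := by
    rw [hd_eq]; linarith [Real.sqrt_nonneg |t - s|]
  have hP_eq : P = Real.sqrt |t| + |x| := rfl
  -- Step 1 : time variation at fixed x
  have step1 : |FtilFun F (t, x) - FtilFun F (s, x)| ≤ C * r ^ (-4 - γ) * |t - s| := by
    rw [FtilFun_abs F t x, FtilFun_abs F s x]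
    rcases le_or_gt (t * s) 0 with hcross | hsame
    · -- crossing case : go through time 0
      have habs : |t| + |s| = |t - s| := by
        have h3 : |t| * |s| = -(t * s) := by
          rw [← abs_mul]; exact abs_of_nonpos hcross
        have h2 : (|t| + |s|) ^ 2 = (t - s) ^ 2 := by
          nlinarith [sq_abs t, sq_abs s]
        calc |t| + |s| = Real.sqrt ((|t| + |s|) ^ 2) :=
              (Real.sqrt_sq (by positivity)).symm
          _ = Real.sqrt ((t - s) ^ 2) := by rw [h2]
          _ = |t - s| := Real.sqrt_sq_eq_abs _
      have hts : Real.sqrt |t| ≤ r := by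
        have h1 : Real.sqrt |t| ≤ Real.sqrt |t - s| :=
          Real.sqrt_le_sqrt (by linarith [abs_nonneg s])
        linarith
      have hxr : r ≤ |x| := by
        have : P = Real.sqrt |t| + |x| := hP_eq
        have hr2 : r + r = P := by rw [hrdef]; ring
        linarith
      have hx0 : x ≠ 0 := by
        intro h; rw [h] at hxr; simp at hxr; linarith
      have hbnd : ∀ τ, (0:ℝ) ≤ τ → τ ≤ max |t| |s| → 0 < τ → r ≤ pnorm (τ, x) := by
        intro τ _ _ _
        have : pnorm (τ, x) = Real.sqrt |τ| + |x| := rfl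
        rw [this]
        linarith [Real.sqrt_nonneg |τ|]
      have h1 := stepT hγ hC hdifft hdt (Or.inl hx0) le_rfl (abs_nonneg t) hr
        (fun τ h1 h2 h3 => hbnd τ h1 (h2.trans (le_max_left _ _)) h3)
      have h2 := stepT hγ hC hdifft hdt (Or.inl hx0) le_rfl (abs_nonneg s) hr
        (fun τ h1 h2 h3 => hbnd τ h1 (h2.trans (le_max_right _ _)) h3)
      calc |FtilFun F (|t|, x) - FtilFun F (|s|, x)|
          ≤ |FtilFun F (|t|, x) - FtilFun F (0, x)| +
            |FtilFun F (0, x) - FtilFun F (|s|, x)| := abs_sub_le _ _ _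
        _ ≤ C * r ^ (-4 - γ) * (|t| - 0) + C * r ^ (-4 - γ) * (|s| - 0) := by
            rw [abs_sub_comm (FtilFun F (0, x))]
            exact add_le_add h1 h2
        _ = C * r ^ (-4 - γ) * (|t| + |s|) := by ring
        _ = C * r ^ (-4 - γ) * |t - s| := by rw [habs]
    · -- same sign case : both nonzero
      have ht0 : t ≠ 0 := fun h => by simp [h] at hsame
      have hs0 : s ≠ 0 := fun h => by simp [h] at hsame
      set a := min |t| |s| with hadef
      set b := max |t| |s| with hbdef
      have ha : 0 < a := lt_min (abs_pos.mpr ht0) (abs_pos.mpr hs0)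
      have hab : a ≤ b := min_le_max
      have hba : b - a = |(|t| - |s|)| := by
        rw [hbdef, hadef, max_sub_min_eq_abs, abs_sub_comm]
      have hbals : |(|t| - |s|)| ≤ |t - s| := abs_abs_sub_abs_le_abs_sub t s
      have hsqa : Real.sqrt |t| - Real.sqrt |t - s| ≤ Real.sqrt a := by
        rcases min_cases |t| |s| with ⟨h, _⟩ | ⟨h, _⟩
        · rw [hadef, h]; linarith [Real.sqrt_nonneg |t - s|]
        · rw [hadef, h]; linarith [sqrt_abs_triangle t s]
      have hbnd : ∀ τ, a ≤ τ → τ ≤ b → 0 < τ → r ≤ pnorm (τ, x) := by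
        intro τ h1 _ h3
        have heq : pnorm (τ, x) = Real.sqrt |τ| + |x| := rfl
        have hsq : Real.sqrt a ≤ Real.sqrt |τ| := by
          apply Real.sqrt_le_sqrt
          rw [abs_of_pos h3]; exact h1
        have hr2 : r + r = P := by rw [hrdef]; ring
        rw [heq]
        have : P = Real.sqrt |t| + |x| := hP_eq
        linarith
      have hkey := stepT hγ hC hdifft hdt (Or.inr ha) ha.le hab hr hbnd
      have hCr : (0:ℝ) ≤ C * r ^ (-4 - γ) := by positivity
      rcases le_total |t| |s| with h | h
      · have hae : a = |t| := min_eq_left h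
        have hbe : b = |s| := max_eq_right h
        rw [abs_sub_comm]
        rw [hae, hbe] at hkey
        calc |FtilFun F (|s|, x) - FtilFun F (|t|, x)|
            ≤ C * r ^ (-4 - γ) * (|s| - |t|) := hkey
          _ ≤ C * r ^ (-4 - γ) * |t - s| := by
              apply mul_le_mul_of_nonneg_left _ hCr
              calc |s| - |t| ≤ |(|t| - |s|)| := by
                    rw [abs_sub_comm]; exact le_abs_self _
                _ ≤ |t - s| := hbals
      · have hae : a = |s| := min_eq_right h
        have hbe : b = |t| := max_eq_left h
        rw [hae, hbe] at hkey
        calc |FtilFun F (|t|, x) - FtilFun F (|s|, x)|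
            ≤ C * r ^ (-4 - γ) * (|t| - |s|) := hkey
          _ ≤ C * r ^ (-4 - γ) * |t - s| := by
              apply mul_le_mul_of_nonneg_left _ hCr
              calc |t| - |s| ≤ |(|t| - |s|)| := le_abs_self _
                _ ≤ |t - s| := hbals
  -- Step 2 : space variation at fixed s
  have hsqs : Real.sqrt |t| - Real.sqrt |t - s| ≤ Real.sqrt |s| := by
    linarith [sqrt_abs_triangle t s]
  have huIcc : ∀ u ∈ Set.uIcc x y, P - d ≤ Real.sqrt |s| + |u| := by
    intro u hu
    have h1 : |u - x| ≤ |y - x| := abs_sub_le_of_mem_uIcc hu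
    have h2 : |x| - |u| ≤ |x - u| := abs_sub_abs_le_abs_sub x u
    have h5 : |x| - |x - y| ≤ |u| := by
      rw [abs_sub_comm x u] at h2
      rw [abs_sub_comm y x] at h1
      linarith
    have : P = Real.sqrt |t| + |x| := hP_eq
    rw [hd_eq]
    linarith
  have hPd : P - d ≥ r := by
    have hr2 : r + r = P := by rw [hrdef]; ring
    linarith
  have step2 : |FtilFun F (s, x) - FtilFun F (s, y)| ≤ C * r ^ (-3 - γ) * |x - y| := by
    rcases eq_or_ne s 0 with rfl | hs0
    · apply stepX0 hγ hC hdiffx hdifft hdx hdt hr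
      intro u hu
      have := huIcc u hu
      simp only [abs_zero, Real.sqrt_zero, zero_add] at this
      linarith
    · have hs' : 0 < |s| := abs_pos.mpr hs0
      rw [FtilFun_abs F s x, FtilFun_abs F s y, FtilFun_pos x hs', FtilFun_pos y hs']
      apply stepX hγ hC hdiffx hdx hs' hr
      intro u hu
      have := huIcc u hu
      have heq : pnorm (|s|, u) = Real.sqrt |s| + |u| := by
        simp [pnorm, abs_abs]
      rw [heq]
      linarith
  -- combine
  have hts2 : |t - s| ≤ Real.sqrt |t - s| * r := by
    have h0 : Real.sqrt |t - s| ≤ r := hd1.trans hdr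
    calc |t - s| = Real.sqrt |t - s| * Real.sqrt |t - s| :=
          (Real.mul_self_sqrt (abs_nonneg _)).symm
      _ ≤ Real.sqrt |t - s| * r :=
          mul_le_mul_of_nonneg_left h0 (Real.sqrt_nonneg _)
  have hrpow : r ^ (-4 - γ) * r = r ^ (-3 - γ) := by
    have h1 : r ^ (-4 - γ) * r = r ^ (-4 - γ) * r ^ (1 : ℝ) := by
      rw [Real.rpow_one]
    rw [h1, ← Real.rpow_add hr, show (-4 - γ + 1 : ℝ) = -3 - γ by ring]
  have hmain : |FtilFun F (t, x) - FtilFun F (s, y)| ≤ C * r ^ (-3 - γ) * d := by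
    calc |FtilFun F (t, x) - FtilFun F (s, y)|
        ≤ |FtilFun F (t, x) - FtilFun F (s, x)| +
          |FtilFun F (s, x) - FtilFun F (s, y)| := abs_sub_le _ _ _
      _ ≤ C * r ^ (-4 - γ) * |t - s| + C * r ^ (-3 - γ) * |x - y| := add_le_add step1 step2
      _ ≤ C * r ^ (-4 - γ) * (Real.sqrt |t - s| * r) + C * r ^ (-3 - γ) * |x - y| := by
          have : (0:ℝ) ≤ C * r ^ (-4 - γ) := by positivity
          nlinarith
      _ = C * r ^ (-3 - γ) * (Real.sqrt |t - s| + |x - y|) := by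
          rw [← hrpow]; ring
      _ = C * r ^ (-3 - γ) * d := by rw [hd_eq]
  -- convert r powers into P powers
  have hrP : r ^ (-3 - γ) = P ^ (-3 - γ) * 2 ^ (3 + γ) := by
    have h2 : ((2:ℝ)) ^ (-3 - γ) = ((2:ℝ) ^ (3 + γ))⁻¹ := by
      rw [show (-3 - γ) = -(3 + γ) by ring, Real.rpow_neg (by norm_num : (0:ℝ) ≤ 2)]
    rw [hrdef, Real.div_rpow hP.le (by norm_num : (0:ℝ) ≤ 2), div_eq_mul_inv, h2, inv_inv]
  have h2pow : (2:ℝ) ^ (3 + γ) ≤ 2 ^ (4 + γ) :=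
    Real.rpow_le_rpow_of_exponent_le one_le_two (by linarith)
  calc |FtilFun F (t, x) - FtilFun F (s, y)| ≤ C * r ^ (-3 - γ) * d := hmain
    _ = C * 2 ^ (3 + γ) * d * P ^ (-3 - γ) := by rw [hrP]; ring
    _ ≤ C * 2 ^ (4 + γ) * d * P ^ (-3 - γ) := by
        have hPp : (0:ℝ) ≤ P ^ (-3 - γ) := Real.rpow_nonneg hP.le _
        have : C * 2 ^ (3 + γ) * d ≤ C * 2 ^ (4 + γ) * d := by
          apply mul_le_mul_of_nonneg_right _ hd0
          exact mul_le_mul_of_nonneg_left h2pow hC.le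
        exact mul_le_mul_of_nonneg_right this hPp
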